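/- Let (Z, 𝒵, μ) be a σ-finite measure space, let h : Z → [0,∞) be measurable with ∫_Z h² dμ < ∞, and suppose there exists δ₁ ∈ (0,∞) such that ∫_E e^{δ₁·h(z)²} μ(dz) < ∞ for every measurable set E with μ(E) < ∞. Then for every M ∈ ℕ, sup_{g ∈ S^M} ∫_Z h(z)·|g(z) − 1| μ(dz) < ∞. -/

import Mathlib

open MeasureTheory
open scoped ENNReal

/-- `l(r) = r·log r − r + 1` (note `Real.log 0 = 0` in Mathlib, so `ell 0 = 1`). -/
noncomputable def ell (r : ℝ) : ℝ := r * Real.log r - r + 1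

lemma ell_ge_sq (r : ℝ) (hr : 0 ≤ r) : (Real.sqrt r - 1)^2 ≤ ell r := by
  rcases eq_or_lt_of_le hr with h0 | h0
  · simp [ell, ← h0]
  · have hs : 0 < Real.sqrt r := Real.sqrt_pos.mpr h0
    have hlog : 1 - (Real.sqrt r)⁻¹ ≤ Real.log (Real.sqrt r) := by
      have := Real.log_le_sub_one_of_pos (x := (Real.sqrt r)⁻¹) (by positivity)
      rw [Real.log_inv] at this
      linarith
    have hlr : Real.log r = 2 * Real.log (Real.sqrt r) := by
      rw [Real.log_sqrt hr]; ring
    have hsq : Real.sqrt r ^ 2 = r := Real.sq_sqrt hr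
    have hinv : r * (Real.sqrt r)⁻¹ = Real.sqrt r := by
      rw [← Real.mul_self_sqrt hr]
      field_simp
      rw [Real.sqrt_sq hs.le]
    have : r * Real.log r ≥ 2 * (r - Real.sqrt r) := by
      have := mul_le_mul_of_nonneg_left hlog (le_of_lt h0)
      rw [hlr]
      nlinarith [hinv]
    simp only [ell]
    nlinarith [hsq]

lemma ell_nonneg (r : ℝ) (hr : 0 ≤ r) : 0 ≤ ell r :=
  le_trans (sq_nonneg _) (ell_ge_sq r hr)

lemma sq_sub_one_le_ell (r : ℝ) (h0 : 0 ≤ r) (h8 : r ≤ 8) : (r - 1)^2 ≤ 16 * ell r := by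
  have hs := Real.sq_sqrt h0
  have hs3 : Real.sqrt r ≤ 3 := by
    have : Real.sqrt r ≤ Real.sqrt 9 := Real.sqrt_le_sqrt (by linarith)
    simpa [show (9:ℝ) = 3^2 by norm_num, Real.sqrt_sq] using this
  have hsn : 0 ≤ Real.sqrt r := Real.sqrt_nonneg r
  have h1 := ell_ge_sq r h0
  nlinarith [sq_nonneg (Real.sqrt r - 1), sq_nonneg (Real.sqrt r + 1)]

lemma exp_two_le : Real.exp 2 ≤ 8 := by
  have h := Real.exp_one_lt_d9
  have : Real.exp 2 = Real.exp 1 * Real.exp 1 := by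
    rw [← Real.exp_add]; norm_num
  nlinarith [Real.exp_pos 1]

lemma log_ge_two (y : ℝ) (hy : 8 ≤ y) : 2 ≤ Real.log y := by
  rw [← Real.log_exp 2]
  exact Real.log_le_log (Real.exp_pos 2) (le_trans exp_two_le hy)

lemma ell_ge_one (r : ℝ) (hr : 8 ≤ r) : 1 ≤ ell r := by
  have h1 := ell_ge_sq r (by linarith)
  have : (2:ℝ) ≤ Real.sqrt r := by
    have : Real.sqrt 4 ≤ Real.sqrt r := Real.sqrt_le_sqrt (by linarith)
    simpa [show (4:ℝ) = 2^2 by norm_num, Real.sqrt_sq] using this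
  nlinarith

lemma mul_log_le_ell (r : ℝ) (hr : 8 ≤ r) : r * Real.log r ≤ 2 * ell r := by
  have h2 := log_ge_two r hr
  simp only [ell]
  nlinarith

lemma key_young (x y : ℝ) (hx : 0 ≤ x) (hy : 8 ≤ y) :
    x * y ≤ Real.exp (2 * x^2) + y * Real.log y := by
  have hly := log_ge_two y hy
  have hyp : (0:ℝ) < y := by linarith
  rcases le_or_gt x 1 with hx1 | hx1
  · have : x * y ≤ y := by nlinarith
    nlinarith [Real.exp_pos (2 * x^2)]
  · rcases le_or_gt y (Real.exp (x^2)) with hye | hye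
    · have hxe : x ≤ Real.exp (x^2) := by
        nlinarith [Real.add_one_le_exp (x^2)]
      have : x * y ≤ Real.exp (x^2) * Real.exp (x^2) := by
        nlinarith [Real.exp_pos (x^2)]
      rw [← Real.exp_add] at this
      have h2 : x^2 + x^2 = 2 * x^2 := by ring
      rw [h2] at this
      nlinarith
    · have : x^2 ≤ Real.log y := by
        rw [← Real.log_exp (x^2)]
        exact Real.log_le_log (Real.exp_pos _) (le_of_lt hye)
      have hxl : x ≤ Real.log y := by nlinarith
      nlinarith [Real.exp_pos (2 * x^2)]

lemma exp_sub_one_le (t : ℝ) (ht : 0 ≤ t) : Real.exp t - 1 ≤ t * Real.exp t := by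
  have h1 : Real.exp t * Real.exp (-t) = 1 := by rw [← Real.exp_add]; simp
  nlinarith [Real.add_one_le_exp (-t), h1, Real.exp_pos t, Real.exp_pos (-t)]

/-- Let `(Z, μ)` be σ-finite, `h : Z → [0,∞)` measurable with
`∫ h² dμ < ∞`, and suppose there is `δ₁ ∈ (0,∞)` such that `∫_E e^{δ₁ h²} dμ < ∞`
for every measurable `E` of finite measure.  Then for every `M ∈ ℕ`,
`sup_{g ∈ S^M} ∫ h·|g − 1| dμ < ∞`. -/
theorem sup_integral_mul_abs_control_sub_one_lt_top
    {Z : Type*} [MeasurableSpace Z] (μ : Measure Z) [SigmaFinite μ]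
    (h : Z → ℝ) (hmeas : Measurable h) (hnonneg : ∀ z, 0 ≤ h z)
    (hL2 : ∫⁻ z, ENNReal.ofReal (h z ^ 2) ∂μ < ⊤)
    (hexp : ∃ δ₁ : ℝ, 0 < δ₁ ∧ ∀ E : Set Z, MeasurableSet E → μ E < ⊤ →
      ∫⁻ z in E, ENNReal.ofReal (Real.exp (δ₁ * h z ^ 2)) ∂μ < ⊤)
    (M : ℕ) :
    ∃ C : ℝ≥0∞, C < ⊤ ∧ ∀ g : Z → ℝ, Measurable g → (∀ z, 0 ≤ g z) →
      (∫⁻ z, ENNReal.ofReal (ell (g z)) ∂μ ≤ (M : ℝ≥0∞)) →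
      ∫⁻ z, ENNReal.ofReal (h z * |g z - 1|) ∂μ ≤ C := by
  obtain ⟨δ, hδ, hE⟩ := hexp
  set s : ℝ := Real.sqrt (δ / 2) with hs_def
  have hs_pos : 0 < s := Real.sqrt_pos.mpr (by linarith)
  have hs_sq : 2 * s ^ 2 = δ := by
    rw [hs_def, Real.sq_sqrt (by linarith : (0:ℝ) ≤ δ / 2)]; ring
  have hexp_meas : Measurable fun z => ENNReal.ofReal (Real.exp (δ * h z ^ 2)) :=
    (Real.measurable_exp.comp (measurable_const.mul (hmeas.pow_const 2))).ennreal_ofReal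
  have hexp1_meas : Measurable fun z => ENNReal.ofReal (Real.exp (δ * h z ^ 2) - 1) :=
    ((Real.measurable_exp.comp (measurable_const.mul (hmeas.pow_const 2))).sub
      measurable_const).ennreal_ofReal
  have hh2_meas : Measurable fun z => ENNReal.ofReal (h z ^ 2) :=
    (hmeas.pow_const 2).ennreal_ofReal
  set A : ℝ≥0∞ := ∫⁻ z, ENNReal.ofReal (Real.exp (δ * h z ^ 2) - 1) ∂μ with hA_def
  have hA_lt : A < ⊤ := by
    have hS : MeasurableSet {z | 1 < h z} := measurableSet_lt measurable_const hmeas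
    have hμS : μ {z | 1 < h z} < ⊤ := by
      have hle : μ {z | 1 < h z} ≤ ∫⁻ z, ENNReal.ofReal (h z ^ 2) ∂μ := by
        rw [← setLIntegral_one]
        calc ∫⁻ _ in {z | 1 < h z}, 1 ∂μ
            ≤ ∫⁻ z in {z | 1 < h z}, ENNReal.ofReal (h z ^ 2) ∂μ := by
              apply setLIntegral_mono' hS
              intro z hz
              simp only [Set.mem_setOf_eq] at hz
              rw [show (1:ℝ≥0∞) = ENNReal.ofReal 1 by simp]
              exact ENNReal.ofReal_le_ofReal (by nlinarith)
          _ ≤ _ := setLIntegral_le_lintegral _ _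
      exact lt_of_le_of_lt hle hL2
    rw [hA_def, ← lintegral_add_compl _ hS]
    apply ENNReal.add_lt_top.mpr
    constructor
    · calc ∫⁻ z in {z | 1 < h z}, ENNReal.ofReal (Real.exp (δ * h z ^ 2) - 1) ∂μ
          ≤ ∫⁻ z in {z | 1 < h z}, ENNReal.ofReal (Real.exp (δ * h z ^ 2)) ∂μ := by
            apply setLIntegral_mono' hS
            intro z _
            exact ENNReal.ofReal_le_ofReal (by linarith [Real.exp_pos (δ * h z ^ 2)])
        _ < ⊤ := hE _ hS hμS
    · calc ∫⁻ z in {z | 1 < h z}ᶜ, ENNReal.ofReal (Real.exp (δ * h z ^ 2) - 1) ∂μ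
          ≤ ∫⁻ z in {z | 1 < h z}ᶜ,
              ENNReal.ofReal (δ * Real.exp δ) * ENNReal.ofReal (h z ^ 2) ∂μ := by
            apply setLIntegral_mono' hS.compl
            intro z hz
            simp only [Set.mem_compl_iff, Set.mem_setOf_eq, not_lt] at hz
            rw [← ENNReal.ofReal_mul (by positivity)]
            apply ENNReal.ofReal_le_ofReal
            have h0 : 0 ≤ h z := hnonneg z
            have ht : 0 ≤ δ * h z ^ 2 := by positivity
            have hh1 : h z ^ 2 ≤ 1 := by nlinarith
            have h1 : δ * h z ^ 2 ≤ δ := by nlinarith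
            have h2 := exp_sub_one_le (δ * h z ^ 2) ht
            have h3 : Real.exp (δ * h z ^ 2) ≤ Real.exp δ := Real.exp_le_exp.mpr h1
            nlinarith [Real.exp_pos (δ * h z ^ 2)]
        _ = ENNReal.ofReal (δ * Real.exp δ) * ∫⁻ z in {z | 1 < h z}ᶜ,
              ENNReal.ofReal (h z ^ 2) ∂μ := lintegral_const_mul' _ _ ENNReal.ofReal_ne_top
        _ ≤ ENNReal.ofReal (δ * Real.exp δ) * ∫⁻ z, ENNReal.ofReal (h z ^ 2) ∂μ := by
            exact mul_le_mul_right (setLIntegral_le_lintegral _ _) _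
        _ < ⊤ := ENNReal.mul_lt_top ENNReal.ofReal_lt_top hL2
  refine ⟨(∫⁻ z, ENNReal.ofReal (h z ^ 2) ∂μ) + 16 * M
      + ENNReal.ofReal s⁻¹ * (((M : ℝ≥0∞) + A) + 2 * M), ?_, ?_⟩
  · have hM : (M : ℝ≥0∞) < ⊤ := ENNReal.natCast_lt_top M
    apply ENNReal.add_lt_top.mpr
    constructor
    · exact ENNReal.add_lt_top.mpr ⟨hL2, ENNReal.mul_lt_top (by norm_num) hM⟩
    · exact ENNReal.mul_lt_top ENNReal.ofReal_lt_top
        (ENNReal.add_lt_top.mpr ⟨ENNReal.add_lt_top.mpr ⟨hM, hA_lt⟩,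
          ENNReal.mul_lt_top (by norm_num) hM⟩)
  · intro g hg hg0 hgM
    have hell_meas : Measurable fun z => ENNReal.ofReal (ell (g z)) := by
      have : Measurable fun z => ell (g z) :=
        ((hg.mul (Real.measurable_log.comp hg)).sub hg).add measurable_const
      exact this.ennreal_ofReal
    set T : Set Z := {z | 8 < g z} with hT_def
    have hT : MeasurableSet T := measurableSet_lt measurable_const hg
    have hμT : μ T ≤ (M : ℝ≥0∞) := by
      calc μ T = ∫⁻ _ in T, 1 ∂μ := (setLIntegral_one T).symm
        _ ≤ ∫⁻ z in T, ENNReal.ofReal (ell (g z)) ∂μ := by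
            apply setLIntegral_mono' hT
            intro z hz
            simp only [hT_def, Set.mem_setOf_eq] at hz
            exact ENNReal.one_le_ofReal.mpr (ell_ge_one (g z) (le_of_lt hz))
        _ ≤ ∫⁻ z, ENNReal.ofReal (ell (g z)) ∂μ := setLIntegral_le_lintegral _ _
        _ ≤ (M : ℝ≥0∞) := hgM
    rw [← lintegral_add_compl _ hT]
    have hTbound : ∫⁻ z in T, ENNReal.ofReal (h z * |g z - 1|) ∂μ
        ≤ ENNReal.ofReal s⁻¹ * (((M : ℝ≥0∞) + A) + 2 * M) := by
      calc ∫⁻ z in T, ENNReal.ofReal (h z * |g z - 1|) ∂μ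
          ≤ ∫⁻ z in T, ENNReal.ofReal s⁻¹ *
              (ENNReal.ofReal (Real.exp (δ * h z ^ 2)) + 2 * ENNReal.ofReal (ell (g z))) ∂μ := by
            apply setLIntegral_mono' hT
            intro z hz
            simp only [hT_def, Set.mem_setOf_eq] at hz
            have h8 : (8:ℝ) ≤ g z := le_of_lt hz
            have h0 : 0 ≤ h z := hnonneg z
            have hellnn : 0 ≤ ell (g z) := ell_nonneg _ (by linarith)
            have key : s * (h z * g z) ≤ Real.exp (δ * h z ^ 2) + 2 * ell (g z) := by
              have hky := key_young (s * h z) (g z) (by positivity) h8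
              have h2s : 2 * (s * h z) ^ 2 = δ * h z ^ 2 := by
                rw [mul_pow]; nlinarith [hs_sq]
              rw [h2s] at hky
              have hml := mul_log_le_ell (g z) h8
              nlinarith
            have hreal : h z * |g z - 1| ≤ s⁻¹ * (Real.exp (δ * h z ^ 2) + 2 * ell (g z)) := by
              have habs : |g z - 1| = g z - 1 := abs_of_nonneg (by linarith)
              have h1 : h z * |g z - 1| ≤ h z * g z := by
                rw [habs]; nlinarith
              have h2 : h z * g z ≤ s⁻¹ * (Real.exp (δ * h z ^ 2) + 2 * ell (g z)) := by
                have h2' := mul_le_mul_of_nonneg_left key (by positivity : (0:ℝ) ≤ s⁻¹)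
                calc h z * g z = s⁻¹ * (s * (h z * g z)) := by
                      field_simp
                  _ ≤ _ := h2'
              linarith
            calc ENNReal.ofReal (h z * |g z - 1|)
                ≤ ENNReal.ofReal (s⁻¹ * (Real.exp (δ * h z ^ 2) + 2 * ell (g z))) :=
                  ENNReal.ofReal_le_ofReal hreal
              _ = ENNReal.ofReal s⁻¹ *
                  (ENNReal.ofReal (Real.exp (δ * h z ^ 2)) + 2 * ENNReal.ofReal (ell (g z))) := by
                  rw [ENNReal.ofReal_mul (by positivity),
                    ENNReal.ofReal_add (le_of_lt (Real.exp_pos _)) (by positivity),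
                    ENNReal.ofReal_mul (by norm_num : (0:ℝ) ≤ 2)]
                  norm_num
        _ = ENNReal.ofReal s⁻¹ * ∫⁻ z in T,
              (ENNReal.ofReal (Real.exp (δ * h z ^ 2)) + 2 * ENNReal.ofReal (ell (g z))) ∂μ :=
            lintegral_const_mul' _ _ ENNReal.ofReal_ne_top
        _ = ENNReal.ofReal s⁻¹ * ((∫⁻ z in T, ENNReal.ofReal (Real.exp (δ * h z ^ 2)) ∂μ)
              + 2 * ∫⁻ z in T, ENNReal.ofReal (ell (g z)) ∂μ) := by
            rw [lintegral_add_left hexp_meas, lintegral_const_mul' _ _ (by norm_num)]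
        _ ≤ ENNReal.ofReal s⁻¹ * (((M : ℝ≥0∞) + A) + 2 * M) := by
            apply mul_le_mul_right
            apply add_le_add
            · calc ∫⁻ z in T, ENNReal.ofReal (Real.exp (δ * h z ^ 2)) ∂μ
                  = ∫⁻ z in T, (1 + ENNReal.ofReal (Real.exp (δ * h z ^ 2) - 1)) ∂μ := by
                    apply lintegral_congr
                    intro z
                    have ht : 0 ≤ δ * h z ^ 2 := by positivity
                    have := Real.one_le_exp ht
                    rw [show Real.exp (δ * h z ^ 2) = 1 + (Real.exp (δ * h z ^ 2) - 1) by ring,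
                      ENNReal.ofReal_add (by norm_num) (by linarith)]
                    simp
                _ = μ T + ∫⁻ z in T, ENNReal.ofReal (Real.exp (δ * h z ^ 2) - 1) ∂μ := by
                    rw [lintegral_add_left measurable_const, setLIntegral_one]
                _ ≤ (M : ℝ≥0∞) + A := add_le_add hμT (setLIntegral_le_lintegral _ _)
            · exact mul_le_mul_right (le_trans (setLIntegral_le_lintegral _ _) hgM) _
    have hTc : ∫⁻ z in Tᶜ, ENNReal.ofReal (h z * |g z - 1|) ∂μ
        ≤ (∫⁻ z, ENNReal.ofReal (h z ^ 2) ∂μ) + 16 * M := by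
      calc ∫⁻ z in Tᶜ, ENNReal.ofReal (h z * |g z - 1|) ∂μ
          ≤ ∫⁻ z in Tᶜ, (ENNReal.ofReal (h z ^ 2) + 16 * ENNReal.ofReal (ell (g z))) ∂μ := by
            apply setLIntegral_mono' hT.compl
            intro z hz
            simp only [hT_def, Set.mem_compl_iff, Set.mem_setOf_eq, not_lt] at hz
            have h0 : 0 ≤ h z := hnonneg z
            have hsq := sq_sub_one_le_ell (g z) (hg0 z) hz
            have hreal : h z * |g z - 1| ≤ h z ^ 2 + 16 * ell (g z) := by
              nlinarith [sq_nonneg (h z - |g z - 1|), sq_abs (g z - 1), abs_nonneg (g z - 1)]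
            calc ENNReal.ofReal (h z * |g z - 1|)
                ≤ ENNReal.ofReal (h z ^ 2 + 16 * ell (g z)) := ENNReal.ofReal_le_ofReal hreal
              _ = ENNReal.ofReal (h z ^ 2) + 16 * ENNReal.ofReal (ell (g z)) := by
                  rw [ENNReal.ofReal_add (by positivity)
                    (by nlinarith [ell_nonneg (g z) (hg0 z)]),
                    ENNReal.ofReal_mul (by norm_num : (0:ℝ) ≤ 16)]
                  norm_num
        _ = (∫⁻ z in Tᶜ, ENNReal.ofReal (h z ^ 2) ∂μ)
              + 16 * ∫⁻ z in Tᶜ, ENNReal.ofReal (ell (g z)) ∂μ := by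
            rw [lintegral_add_left hh2_meas, lintegral_const_mul' _ _ (by norm_num)]
        _ ≤ (∫⁻ z, ENNReal.ofReal (h z ^ 2) ∂μ) + 16 * M :=
            add_le_add (setLIntegral_le_lintegral _ _)
              (mul_le_mul_right (le_trans (setLIntegral_le_lintegral _ _) hgM) _)
    calc (∫⁻ z in T, ENNReal.ofReal (h z * |g z - 1|) ∂μ)
          + ∫⁻ z in Tᶜ, ENNReal.ofReal (h z * |g z - 1|) ∂μ
        ≤ ENNReal.ofReal s⁻¹ * (((M : ℝ≥0∞) + A) + 2 * M)
          + ((∫⁻ z, ENNReal.ofReal (h z ^ 2) ∂μ) + 16 * M) := add_le_add hTbound hTc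
      _ = _ := by ring
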